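/- Let b(n,m) = |2ⁿ − 2ᵐ| on ℕ, and let y_n = s(n)·4^{⌊n/2⌋} where s(n) = (−1)^{⌊(n−1)/2⌋}, and d(n,m) = |y_n − y_m|. Then (3/7)·b(n,m) ≤ d(n,m) ≤ 12·b(n,m) for all n, m ∈ ℕ; in particular the metrics b and d on ℕ are bi-Lipschitz equivalent (hence quasi-isometric). -/
import Mathlib


/-- `y_n = s(n) · 4^⌊n/2⌋` with `s(n) = (-1)^⌊(n-1)/2⌋` (natural-number division). -/
noncomputable def yval (n : ℕ) : ℝ := (-1 : ℝ) ^ ((n - 1) / 2) * 4 ^ (n / 2)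

lemma yval_odd (k : ℕ) : yval (2*k+1) = (-1:ℝ)^k * 4^k := by
  have h1 : (2*k+1-1)/2 = k := by omega
  have h2 : (2*k+1)/2 = k := by omega
  rw [yval, h1, h2]

lemma yval_even (k : ℕ) : yval (2*k+2) = (-1:ℝ)^k * 4^(k+1) := by
  have h1 : (2*k+2-1)/2 = k := by omega
  have h2 : (2*k+2)/2 = k+1 := by omega
  rw [yval, h1, h2]

lemma abs_yval (n : ℕ) : |yval n| = 4 ^ (n/2) := by
  rw [yval, abs_mul, abs_pow, abs_pow]
  norm_num

lemma yval_le (n : ℕ) : |yval n| ≤ 2 ^ n := by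
  rw [abs_yval]
  have h : (4:ℝ)^(n/2) = 2^(2*(n/2)) := by rw [pow_mul]; norm_num
  rw [h]
  exact pow_le_pow_right₀ one_le_two (by omega)

lemma le_yval (n : ℕ) (h : 1 ≤ n) : (2:ℝ)^(n-1) ≤ |yval n| := by
  rw [abs_yval]
  have h2 : (4:ℝ)^(n/2) = 2^(2*(n/2)) := by rw [pow_mul]; norm_num
  rw [h2]
  exact pow_le_pow_right₀ one_le_two (by omega)

lemma lower_aux (m n : ℕ) (hm : 1 ≤ m) (h : m < n) :
    (3/7:ℝ) * (2^n - 2^m) ≤ |yval n - yval m| := by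
  have key : ∀ j c : ℕ, (2:ℝ)^(2*j+c) = 2^c * 4^j := by
    intro j c
    rw [pow_add, pow_mul]
    norm_num
    ring
  rcases (show n = m+1 ∨ n = m+2 ∨ m+3 ≤ n by omega) with rfl | rfl | h3
  · -- n = m + 1
    rcases Nat.even_or_odd m with ⟨r, hr⟩ | ⟨j, rfl⟩
    · -- m even, m = 2j+2
      obtain ⟨j, rfl⟩ : ∃ j, m = 2*j+2 := ⟨r-1, by omega⟩
      rw [show 2*j+2+1 = 2*(j+1)+1 by ring, yval_odd, yval_even]
      have hd : (-1:ℝ)^(j+1)*4^(j+1) - (-1)^j*4^(j+1) = (-1)^(j+1)*(8*4^j) := by ring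
      rw [hd, abs_mul, abs_pow, abs_neg, abs_one, one_pow, one_mul,
        abs_of_nonneg (show (0:ℝ) ≤ 8*4^j by positivity),
        show 2*(j+1)+1 = 2*j+3 by ring, key j 3, key j 2]
      have h4 : (0:ℝ) < 4^j := by positivity
      norm_num
      linarith
    · -- m odd, m = 2j+1
      rw [show 2*j+1+1 = 2*j+2 by ring, yval_even, yval_odd]
      have hd : (-1:ℝ)^j*4^(j+1) - (-1)^j*4^j = (-1)^j*(3*4^j) := by ring
      rw [hd, abs_mul, abs_pow, abs_neg, abs_one, one_pow, one_mul,
        abs_of_nonneg (show (0:ℝ) ≤ 3*4^j by positivity), key j 2, key j 1]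
      have h4 : (0:ℝ) < 4^j := by positivity
      norm_num
      linarith
  · -- n = m + 2
    rcases Nat.even_or_odd m with ⟨r, hr⟩ | ⟨j, rfl⟩
    · -- m even, m = 2j+2
      obtain ⟨j, rfl⟩ : ∃ j, m = 2*j+2 := ⟨r-1, by omega⟩
      rw [show 2*j+2+2 = 2*(j+1)+2 by ring, yval_even (j+1), yval_even j]
      have hd : (-1:ℝ)^(j+1)*4^(j+1+1) - (-1)^j*4^(j+1) = (-1)^(j+1)*(20*4^j) := by ring
      rw [hd, abs_mul, abs_pow, abs_neg, abs_one, one_pow, one_mul,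
        abs_of_nonneg (show (0:ℝ) ≤ 20*4^j by positivity),
        show 2*(j+1)+2 = 2*j+4 by ring, key j 4, key j 2]
      have h4 : (0:ℝ) < 4^j := by positivity
      norm_num
      linarith
    · -- m odd, m = 2j+1
      rw [show 2*j+1+2 = 2*(j+1)+1 by ring, yval_odd (j+1), yval_odd j]
      have hd : (-1:ℝ)^(j+1)*4^(j+1) - (-1)^j*4^j = (-1)^(j+1)*(5*4^j) := by ring
      rw [hd, abs_mul, abs_pow, abs_neg, abs_one, one_pow, one_mul,
        abs_of_nonneg (show (0:ℝ) ≤ 5*4^j by positivity),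
        show 2*(j+1)+1 = 2*j+3 by ring, key j 3, key j 1]
      have h4 : (0:ℝ) < 4^j := by positivity
      norm_num
      linarith
  · -- n ≥ m + 3
    have h1 : (2:ℝ)^(n-1) ≤ |yval n| := le_yval n (by omega)
    have h2 : |yval m| ≤ 2^m := yval_le m
    have ht : |yval n| - |yval m| ≤ |yval n - yval m| := abs_sub_abs_le_abs_sub _ _
    have e : (2:ℝ)^n = 2 * 2^(n-1) := by
      rw [← pow_succ']
      congr 1
      omega
    have hle : (2:ℝ)^(m+2) ≤ 2^(n-1) := pow_le_pow_right₀ one_le_two (by omega)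
    have e2 : (2:ℝ)^(m+2) = 4*2^m := by ring
    have hp : (0:ℝ) < 2^m := by positivity
    linarith

lemma upper_aux (m n : ℕ) (h : m < n) :
    |yval n - yval m| ≤ 12 * (2^n - 2^m) := by
  have t : |yval n - yval m| ≤ |yval n| + |yval m| := by
    simpa [sub_eq_add_neg, abs_neg] using abs_add_le (yval n) (-(yval m))
  have h1 := yval_le n
  have h2 := yval_le m
  have hle : (2:ℝ)^(m+1) ≤ 2^n := pow_le_pow_right₀ one_le_two (by omega)
  have e : (2:ℝ)^(m+1) = 2*2^m := by ring
  have hp : (0:ℝ) < 2^m := by positivity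
  linarith

/-- with `b(n, m) = |2ⁿ - 2ᵐ|` and `d(n, m) = |y_n - y_m|`, one has
`(3/7)·b(n,m) ≤ d(n,m) ≤ 12·b(n,m)`, i.e. the metrics `b` and `d` on `ℕ` are
bi-Lipschitz equivalent (hence quasi-isometric). -/
theorem stmt13 : ∀ n m : ℕ, 1 ≤ n → 1 ≤ m →
    (3 / 7 : ℝ) * |(2 : ℝ) ^ n - 2 ^ m| ≤ |yval n - yval m| ∧
    |yval n - yval m| ≤ 12 * |(2 : ℝ) ^ n - 2 ^ m| := by
  intro n m hn hm
  rcases lt_trichotomy n m with h | rfl | h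
  · have hb : |(2 : ℝ) ^ n - 2 ^ m| = 2^m - 2^n := by
      rw [abs_sub_comm, abs_of_nonneg]
      have : (2:ℝ)^n ≤ 2^m := pow_le_pow_right₀ one_le_two h.le
      linarith
    have hy : |yval n - yval m| = |yval m - yval n| := abs_sub_comm _ _
    rw [hb, hy]
    exact ⟨lower_aux n m hn h, upper_aux n m h⟩
  · simp
  · have hb : |(2 : ℝ) ^ n - 2 ^ m| = 2^n - 2^m := by
      rw [abs_of_nonneg]
      have : (2:ℝ)^m ≤ 2^n := pow_le_pow_right₀ one_le_two h.le
      linarith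
    rw [hb]
    exact ⟨lower_aux m n hm h, upper_aux m n h⟩
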